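/- Let A be an alphabet of size m, ψ₁,…,ψ_k be hash-functions A → [d] drawn uniformly from an s-independent family, and for any s-element set X ⊂ A let Z be the number of distinct values among the sk hashes {ψ_j(a) : a ∈ X, j ∈ [k]}. Then with probability at least 1 − δ, simultaneously for all C(m,s) sets X of size s: Z ≥ sk − s²k²/(2d) − max{ √((2 s³ k² / d) log(m/δ)), (4s/3) log(m/δ) }. -/

import Mathlib

open MeasureTheory ProbabilityTheory Finset


private lemma fact_ge_aux : ∀ i : ℕ, 2 * 3 ^ i ≤ (i + 2).factorial := by
  intro i
  induction i with
  | zero => simp [Nat.factorial]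
  | succ j ih =>
    have : (j + 3).factorial = (j + 3) * (j + 2).factorial := rfl
    calc 2 * 3 ^ (j + 1) = 3 * (2 * 3 ^ j) := by ring
    _ ≤ 3 * (j + 2).factorial := by omega
    _ ≤ (j + 3) * (j + 2).factorial := by
        exact Nat.mul_le_mul_right _ (by omega)
    _ = (j + 3).factorial := this.symm

private lemma exp_le_bernstein {x : ℝ} (h0 : 0 ≤ x) (h3 : x < 3) :
    Real.exp x ≤ 1 + x + x ^ 2 / (2 * (1 - x / 3)) := by
  have hsum : Real.exp x = ∑' n : ℕ, x ^ n / n.factorial := by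
    rw [Real.exp_eq_exp_ℝ, NormedSpace.exp_eq_tsum_div]
  have hS : Summable (fun n : ℕ => x ^ n / n.factorial) :=
    Real.summable_pow_div_factorial x
  have hsplit := Summable.sum_add_tsum_nat_add 2 hS
  have hgeo : Summable (fun i : ℕ => x ^ 2 / 2 * (x / 3) ^ i) := by
    apply Summable.mul_left
    exact summable_geometric_of_lt_one (by positivity) (by linarith)
  have hterm : ∀ i : ℕ, x ^ (i + 2) / (i + 2).factorial ≤ x ^ 2 / 2 * (x / 3) ^ i := by
    intro i
    have h2 : (2:ℝ) * 3 ^ i ≤ (i + 2).factorial := by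
      exact_mod_cast fact_ge_aux i
    have hle : x ^ (i + 2) / (i + 2).factorial ≤ x ^ (i + 2) / (2 * 3 ^ i) :=
      div_le_div_of_nonneg_left (by positivity) (by positivity) h2
    refine hle.trans (le_of_eq ?_)
    rw [div_pow, pow_add]
    field_simp
  have htail : (∑' i : ℕ, x ^ (i + 2) / (i + 2).factorial)
      ≤ ∑' i : ℕ, x ^ 2 / 2 * (x / 3) ^ i := by
    apply Summable.tsum_le_tsum hterm _ hgeo
    exact (summable_nat_add_iff 2).mpr hS
  have hgeoval : (∑' i : ℕ, x ^ 2 / 2 * (x / 3) ^ i) = x ^ 2 / 2 * (1 - x / 3)⁻¹ := by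
    rw [tsum_mul_left, tsum_geometric_of_lt_one (by positivity) (by linarith)]
  have hr2 : (∑ i ∈ Finset.range 2, x ^ i / i.factorial) = 1 + x := by
    simp [Finset.sum_range_succ, Nat.factorial]
  calc Real.exp x = (∑ i ∈ Finset.range 2, x ^ i / i.factorial)
        + ∑' i : ℕ, x ^ (i + 2) / (i + 2).factorial := by rw [hsum, ← hsplit]
  _ ≤ (1 + x) + x ^ 2 / 2 * (1 - x / 3)⁻¹ := by
      rw [hr2]; gcongr; rw [← hgeoval]; exact htail
  _ = 1 + x + x ^ 2 / (2 * (1 - x / 3)) := by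
      have hne : (0:ℝ) < 1 - x / 3 := by linarith
      field_simp


private lemma image_cons_eq {n d : ℕ} (v : Fin d) (g : Fin n → Fin d) :
    (Finset.univ.image (Fin.cons v g : Fin (n+1) → Fin d)) = insert v (Finset.univ.image g) := by
  ext y
  simp only [Finset.mem_image, Finset.mem_insert, Finset.mem_univ, true_and]
  constructor
  · rintro ⟨i, hi⟩
    rcases Fin.eq_zero_or_eq_succ i with h0 | ⟨j, hj⟩
    · left; rw [h0] at hi; simpa using hi.symm
    · right; exact ⟨j, by rw [hj] at hi; simpa using hi⟩
  · rintro (rfl | ⟨j, hj⟩)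
    · exact ⟨0, by simp⟩
    · exact ⟨j.succ, by simpa using hj⟩

private lemma sum_exp_bound (d : ℕ) (hd : 0 < d) (l : ℝ) (hl : 0 ≤ l) :
    ∀ n : ℕ, (∑ g : Fin n → Fin d,
        Real.exp (l * ((n : ℝ) - ((Finset.univ.image g).card : ℝ))))
      ≤ (d : ℝ) ^ n * Real.exp ((Real.exp l - 1) * ((n : ℝ) * ((n : ℝ) - 1)) / (2 * d)) := by
  intro n
  induction n with
  | zero =>
    simp
  | succ n ih =>
    have hdR : (0:ℝ) < d := by exact_mod_cast hd
    push_cast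
    have key : (∑ g : Fin (n+1) → Fin d,
          Real.exp (l * (((n:ℝ)+1) - ((Finset.univ.image g).card : ℝ))))
        = ∑ g : Fin n → Fin d, ∑ v : Fin d,
            Real.exp (l * (((n:ℝ)+1) - ((insert v (Finset.univ.image g)).card : ℝ))) := by
      rw [← Equiv.sum_comp (Fin.consEquiv (fun _ => Fin d))]
      rw [Fintype.sum_prod_type]
      rw [Finset.sum_comm]
      refine Finset.sum_congr rfl fun g _ => Finset.sum_congr rfl fun v _ => ?_
      congr 2
      rw [show ((Fin.consEquiv fun _ => Fin d) (v, g) : Fin (n+1) → Fin d) = Fin.cons v g from rfl,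
        image_cons_eq]
    rw [key]
    have inner : ∀ g : Fin n → Fin d,
        (∑ v : Fin d, Real.exp (l * (((n:ℝ)+1) - ((insert v (Finset.univ.image g)).card : ℝ))))
          ≤ Real.exp (l * ((n:ℝ) - ((Finset.univ.image g).card : ℝ)))
            * ((d:ℝ) * Real.exp ((n:ℝ) * (Real.exp l - 1) / d)) := by
      intro g
      set S := Finset.univ.image g with hS
      have hcard : (S.card : ℝ) ≤ (n:ℝ) := by
        exact_mod_cast (Finset.card_image_le.trans (by simp))
      have hsplit : (∑ v : Fin d, Real.exp (l * (((n:ℝ)+1) - ((insert v S).card : ℝ))))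
          = Real.exp (l * ((n:ℝ) - (S.card : ℝ))) * ((S.card : ℝ) * Real.exp l + ((d:ℝ) - S.card)) := by
        have : ∀ v : Fin d, Real.exp (l * (((n:ℝ)+1) - ((insert v S).card : ℝ)))
            = Real.exp (l * ((n:ℝ) - (S.card : ℝ))) * (if v ∈ S then Real.exp l else 1) := by
          intro v
          by_cases hv : v ∈ S
          · rw [Finset.card_insert_of_mem hv, if_pos hv, ← Real.exp_add]
            congr 1
            ring
          · rw [Finset.card_insert_of_notMem hv, if_neg hv, mul_one]
            congr 1
            push_cast
            ring
        rw [Finset.sum_congr rfl (fun v _ => this v), ← Finset.mul_sum]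
        congr 1
        rw [Finset.sum_ite, Finset.sum_const, Finset.sum_const, Finset.filter_univ_mem,
          Finset.filter_not, Finset.filter_univ_mem]
        have hSd : S.card ≤ d := by
          simpa using Finset.card_le_card (Finset.subset_univ S)
        rw [Finset.card_sdiff_of_subset (Finset.subset_univ S)]
        simp only [nsmul_eq_mul, smul_eq_mul, mul_one, Finset.card_univ, Fintype.card_fin]
        push_cast [Nat.cast_sub hSd]
        ring
      rw [hsplit]
      apply mul_le_mul_of_nonneg_left _ (Real.exp_nonneg _)
      have h1 : (S.card : ℝ) * Real.exp l + ((d:ℝ) - S.card)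
          = (d:ℝ) + (S.card : ℝ) * (Real.exp l - 1) := by ring
      rw [h1]
      have h2 : (d:ℝ) + (S.card : ℝ) * (Real.exp l - 1) ≤ (d:ℝ) + (n:ℝ) * (Real.exp l - 1) := by
        have : (1:ℝ) ≤ Real.exp l := by
          rw [← Real.exp_zero]; exact Real.exp_le_exp.mpr hl
        nlinarith [hcard, Nat.cast_nonneg (α := ℝ) S.card]
      refine h2.trans ?_
      have h3 : (d:ℝ) + (n:ℝ) * (Real.exp l - 1) = (d:ℝ) * (1 + (n:ℝ) * (Real.exp l - 1) / d) := by
        field_simp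
      rw [h3]
      apply mul_le_mul_of_nonneg_left _ hdR.le
      have := Real.add_one_le_exp ((n:ℝ) * (Real.exp l - 1) / d)
      linarith
    calc (∑ g : Fin n → Fin d, ∑ v : Fin d,
          Real.exp (l * (((n:ℝ)+1) - ((insert v (Finset.univ.image g)).card : ℝ))))
        ≤ ∑ g : Fin n → Fin d, Real.exp (l * ((n:ℝ) - ((Finset.univ.image g).card : ℝ)))
            * ((d:ℝ) * Real.exp ((n:ℝ) * (Real.exp l - 1) / d)) :=
          Finset.sum_le_sum fun g _ => inner g
    _ = (∑ g : Fin n → Fin d, Real.exp (l * ((n:ℝ) - ((Finset.univ.image g).card : ℝ))))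
            * ((d:ℝ) * Real.exp ((n:ℝ) * (Real.exp l - 1) / d)) := by
          rw [← Finset.sum_mul]
    _ ≤ ((d : ℝ) ^ n * Real.exp ((Real.exp l - 1) * ((n : ℝ) * ((n : ℝ) - 1)) / (2 * d)))
            * ((d:ℝ) * Real.exp ((n:ℝ) * (Real.exp l - 1) / d)) := by
          apply mul_le_mul_of_nonneg_right ih (by positivity)
    _ = (d : ℝ) ^ (n+1) * (Real.exp ((Real.exp l - 1) * ((n : ℝ) * ((n : ℝ) - 1)) / (2 * d))
            * Real.exp ((n:ℝ) * (Real.exp l - 1) / d)) := by ring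
    _ = (d : ℝ) ^ (n+1) * Real.exp ((Real.exp l - 1) * (((n:ℝ)+1) * (((n:ℝ)+1) - 1)) / (2 * d)) := by
          rw [← Real.exp_add]
          congr 1
          field_simp
          ring

open Classical in
private lemma count_bad (d n : ℕ) (hd : 0 < d) (l a : ℝ) (hl : 0 ≤ l) :
    ((Finset.univ.filter (fun g : Fin n → Fin d =>
        ((Finset.univ.image g).card : ℝ) < (n : ℝ) - a)).card : ℝ)
      ≤ (d : ℝ) ^ n * Real.exp ((Real.exp l - 1) * ((n : ℝ) * ((n : ℝ) - 1)) / (2 * d) - l * a) := by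
  set F := Finset.univ.filter (fun g : Fin n → Fin d =>
      ((Finset.univ.image g).card : ℝ) < (n : ℝ) - a) with hF
  have step : (F.card : ℝ) * Real.exp (l * a)
      ≤ ∑ g : Fin n → Fin d, Real.exp (l * ((n : ℝ) - ((Finset.univ.image g).card : ℝ))) := by
    calc (F.card : ℝ) * Real.exp (l * a)
        = ∑ _g ∈ F, Real.exp (l * a) := by rw [Finset.sum_const, nsmul_eq_mul]
    _ ≤ ∑ g ∈ F, Real.exp (l * ((n : ℝ) - ((Finset.univ.image g).card : ℝ))) := by
        apply Finset.sum_le_sum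
        intro g hg
        apply Real.exp_le_exp.mpr
        apply mul_le_mul_of_nonneg_left _ hl
        have := (Finset.mem_filter.mp hg).2
        linarith
    _ ≤ ∑ g : Fin n → Fin d, Real.exp (l * ((n : ℝ) - ((Finset.univ.image g).card : ℝ))) := by
        apply Finset.sum_le_sum_of_subset_of_nonneg (Finset.filter_subset _ _)
        intro g _ _
        positivity
  have hbound := sum_exp_bound d hd l hl n
  have hexp : (0:ℝ) < Real.exp (l * a) := Real.exp_pos _
  have : (F.card : ℝ) ≤ ((d : ℝ) ^ n
      * Real.exp ((Real.exp l - 1) * ((n : ℝ) * ((n : ℝ) - 1)) / (2 * d))) / Real.exp (l * a) := by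
    rw [le_div_iff₀ hexp]
    exact step.trans hbound
  refine this.trans (le_of_eq ?_)
  rw [Real.exp_sub, mul_div_assoc]

private lemma bernstein_choice {B t L sR : ℝ} (hB : 0 < B) (hL : 0 < L) (hs : 1 ≤ sR)
    (ht1 : 4 * sR * B * L ≤ t ^ 2) (ht2 : 4 * sR / 3 * L ≤ t) (ht : 0 < t) :
    ∃ l : ℝ, 0 ≤ l ∧ (Real.exp l - 1) * B - l * (B + t) ≤ -(sR * L) := by
  have hden : (0:ℝ) < B + t / 3 := by linarith
  refine ⟨t / (B + t / 3), by positivity, ?_⟩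
  set l := t / (B + t / 3) with hl
  have hl3 : l < 3 := by
    rw [hl, div_lt_iff₀ hden]
    linarith
  have hl0 : 0 ≤ l := by positivity
  have hexp := exp_le_bernstein hl0 hl3
  have h13 : (0:ℝ) < 1 - l / 3 := by linarith
  have step1 : (Real.exp l - 1) * B - l * (B + t)
      ≤ (l ^ 2 / (2 * (1 - l / 3))) * B - l * t := by
    nlinarith [hB]
  have heq : (l ^ 2 / (2 * (1 - l / 3))) * B - l * t = -(t ^ 2 / (2 * (B + t / 3))) := by
    rw [hl]
    have h1 : B + t / 3 ≠ 0 := ne_of_gt hden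
    have h2 : 1 - t / (B + t / 3) / 3 = B / (B + t / 3) := by
      field_simp
      ring
    rw [h2]
    field_simp
    ring
  have hfin : sR * L ≤ t ^ 2 / (2 * (B + t / 3)) := by
    rw [le_div_iff₀ (by positivity)]
    nlinarith [mul_le_mul_of_nonneg_right ht2 ht.le]
  linarith [step1, heq ▸ step1]


set_option maxHeartbeats 2000000 in
/-- Lemma 1 of the paper (hash-collision lemma): with probability
at least `1 − δ`, simultaneously for every `s`-element set `X`, the number of
distinct values among the `sk` hashes of the symbols of `X` is at least
`sk − s²k²/(2d) − max{√((2s³k²/d) log(m/δ)), (4s/3) log(m/δ)}`. -/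
theorem stmt_13 {Ω : Type*} [MeasurableSpace Ω] (μ : Measure Ω)
    [IsProbabilityMeasure μ]
    {A : Type*} [Fintype A] [DecidableEq A] (m : ℕ) (hm : Fintype.card A = m)
    (k d s : ℕ) (hk : 0 < k) (hd : 0 < d) (hs : 0 < s)
    (ψ : Fin k → Ω → A → Fin d)
    (hmeas : ∀ j a, Measurable fun ω => ψ j ω a)
    (hunif : ∀ j a v, μ {ω | ψ j ω a = v} = (d : ENNReal)⁻¹)
    (hindep : ∀ X : Finset A, X.card = s →
      iIndepFun
        (fun (p : Fin k × {a : A // a ∈ X}) ω => ψ p.1 ω p.2.1) μ)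
    (δ : ℝ) (hδ0 : 0 < δ) (hδ1 : δ < 1) :
    ENNReal.ofReal (1 - δ) ≤
      μ {ω | ∀ X : Finset A, X.card = s →
        (((Finset.univ ×ˢ X).image fun p : Fin k × A => ψ p.1 ω p.2).card : ℝ)
          ≥ (s : ℝ) * k - (s : ℝ) ^ 2 * k ^ 2 / (2 * d)
            - max (Real.sqrt ((2 * (s : ℝ) ^ 3 * k ^ 2 / d) * Real.log (m / δ)))
                ((4 * (s : ℝ) / 3) * Real.log (m / δ))} := by
  classical
  set L : ℝ := Real.log (m / δ) with hLdef
  set B₀ : ℝ := (s : ℝ) ^ 2 * k ^ 2 / (2 * d) with hB0def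
  set t : ℝ := max (Real.sqrt ((2 * (s : ℝ) ^ 3 * k ^ 2 / d) * L)) ((4 * (s : ℝ) / 3) * L)
    with htdef
  set r : ℝ := (s : ℝ) * k - B₀ - t with hrdef
  set G : Set Ω := {ω | ∀ X : Finset A, X.card = s →
      (((Finset.univ ×ˢ X).image fun p : Fin k × A => ψ p.1 ω p.2).card : ℝ) ≥ r} with hGdef
  -- Bad events
  set Bad : Finset A → Set Ω := fun X => {ω |
      (((Finset.univ ×ˢ X).image fun p : Fin k × A => ψ p.1 ω p.2).card : ℝ) < r} with hBaddef
  have hdR : (0:ℝ) < d := by exact_mod_cast hd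
  have hsR : (1:ℝ) ≤ (s:ℝ) := by exact_mod_cast hs
  have hkR : (1:ℝ) ≤ (k:ℝ) := by exact_mod_cast hk
  -- per-set bound
  have hperX : ∀ X : Finset A, X.card = s → μ (Bad X) ≤ ENNReal.ofReal (δ / (m:ℝ) ^ s) := by
    intro X hXs
    have hsm : s ≤ m := by
      rw [← hXs, ← hm]
      exact Finset.card_le_univ X
    have hm1 : (1:ℝ) ≤ (m:ℝ) := by
      have : 1 ≤ m := le_trans hs hsm
      exact_mod_cast this
    have hL : 0 < L := by
      rw [hLdef]
      apply Real.log_pos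
      rw [lt_div_iff₀ hδ0]
      nlinarith
    have hB0 : 0 < B₀ := by
      rw [hB0def]; positivity
    have ht2 : 4 * (s:ℝ) / 3 * L ≤ t := by
      rw [htdef]
      exact le_max_of_le_right (le_of_eq (by ring))
    have htpos : 0 < t := by
      have : 0 < 4 * (s:ℝ) / 3 * L := by positivity
      linarith
    have ht1 : 4 * (s:ℝ) * B₀ * L ≤ t ^ 2 := by
      have harg : (2 * (s : ℝ) ^ 3 * k ^ 2 / d) * L = 4 * (s:ℝ) * B₀ * L := by
        rw [hB0def]; field_simp; ring
      have h1 : Real.sqrt ((2 * (s : ℝ) ^ 3 * k ^ 2 / d) * L) ≤ t := le_max_left _ _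
      have h2 : (0:ℝ) ≤ (2 * (s : ℝ) ^ 3 * k ^ 2 / d) * L := by positivity
      calc 4 * (s:ℝ) * B₀ * L = (2 * (s : ℝ) ^ 3 * k ^ 2 / d) * L := harg.symm
      _ = Real.sqrt ((2 * (s : ℝ) ^ 3 * k ^ 2 / d) * L) ^ 2 := (Real.sq_sqrt h2).symm
      _ ≤ t ^ 2 := by nlinarith [Real.sqrt_nonneg ((2 * (s : ℝ) ^ 3 * k ^ 2 / d) * L)]
    obtain ⟨l, hl0, hlE⟩ := bernstein_choice hB0 hL hsR ht1 ht2 htpos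
    -- index type
    have hcardι : Fintype.card (Fin k × {a : A // a ∈ X}) = k * s := by
      simp [Fintype.card_coe, hXs]
    set ι := Fin k × {a : A // a ∈ X} with hι
    set N := k * s with hN
    have e : Fin N ≃ ι := (Fintype.equivFinOfCardEq hcardι).symm
    -- the image as image over ι
    have hZeq : ∀ ω, ((Finset.univ ×ˢ X).image fun p : Fin k × A => ψ p.1 ω p.2)
        = Finset.univ.image fun q : ι => ψ q.1 ω q.2.1 := by
      intro ω
      ext v
      simp only [Finset.mem_image, Finset.mem_product, Finset.mem_univ, true_and]
      constructor
      · rintro ⟨⟨j, a⟩, ha, hv⟩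
        exact ⟨⟨j, ⟨a, ha⟩⟩, hv⟩
      · rintro ⟨⟨j, a⟩, hv⟩
        exact ⟨⟨j, a.1⟩, a.2, hv⟩
    -- cells
    set cell : (ι → Fin d) → Set Ω := fun g =>
      ⋂ p ∈ (Finset.univ : Finset ι), (fun ω => ψ p.1 ω p.2.1) ⁻¹' {g p} with hcelldef
    have hcellμ : ∀ g : ι → Fin d, μ (cell g) = ((d : ENNReal)⁻¹) ^ N := by
      intro g
      rw [hcelldef]
      rw [(hindep X hXs).measure_inter_preimage_eq_mul Finset.univ
        (sets := fun p => {g p}) (fun p _ => MeasurableSpace.measurableSet_top)]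
      have : ∀ p : ι, μ ((fun ω => ψ p.1 ω p.2.1) ⁻¹' {g p}) = (d : ENNReal)⁻¹ := by
        intro p
        rw [show (fun ω => ψ p.1 ω p.2.1) ⁻¹' {g p} = {ω | ψ p.1 ω p.2.1 = g p} from rfl]
        exact hunif p.1 p.2.1 (g p)
      rw [Finset.prod_congr rfl (fun p _ => this p), Finset.prod_const, Finset.card_univ, hcardι]
    -- bad functions
    set badF : Finset (ι → Fin d) := Finset.univ.filter
        (fun g : ι → Fin d => ((Finset.univ.image g).card : ℝ) < r) with hbadF
    have hcover : Bad X ⊆ ⋃ g ∈ badF, cell g := by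
      intro ω hω
      rw [hBaddef] at hω
      simp only [Set.mem_setOf_eq] at hω
      rw [hZeq ω] at hω
      have hmem : (fun q : ι => ψ q.1 ω q.2.1) ∈ badF := by
        rw [hbadF]
        simp only [Finset.mem_filter, Finset.mem_univ, true_and]
        exact hω
      have hc : ω ∈ cell (fun q : ι => ψ q.1 ω q.2.1) := by
        rw [hcelldef]
        simp only [Set.mem_iInter, Set.mem_preimage, Set.mem_singleton_iff]
        intro p _
        trivial
      exact Set.mem_biUnion hmem hc
    -- counting
    have hbadcard : (badF.card : ℝ)
        ≤ (d : ℝ) ^ N * Real.exp ((Real.exp l - 1) * ((N : ℝ) * ((N : ℝ) - 1)) / (2 * d)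
            - l * (B₀ + t)) := by
      have hcb := count_bad d N hd l (B₀ + t) hl0
      have hcardeq : badF.card = (Finset.univ.filter (fun g : Fin N → Fin d =>
          ((Finset.univ.image g).card : ℝ) < (N : ℝ) - (B₀ + t))).card := by
        apply Finset.card_bij' (fun g _ => g ∘ e) (fun h _ => h ∘ e.symm)
        · intro g hg
          simp only [hbadF, Finset.mem_filter, Finset.mem_univ, true_and] at hg ⊢
          have himg : Finset.univ.image (g ∘ e) = Finset.univ.image g := by
            rw [show Finset.univ.image (g ∘ e) = (Finset.univ.image (e : Fin N → ι)).image g by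
              rw [Finset.image_image], Finset.image_univ_equiv]
          rw [himg]
          have : (N : ℝ) - (B₀ + t) = r - ((s:ℝ)*k - (N:ℝ)) := by rw [hrdef]; ring
          have hNsk : (N : ℝ) = (s:ℝ) * k := by rw [hN]; push_cast; ring
          rw [this, hNsk]
          simpa using hg
        · intro h hh
          simp only [hbadF, Finset.mem_filter, Finset.mem_univ, true_and] at hh ⊢
          have himg : Finset.univ.image (h ∘ e.symm) = Finset.univ.image h := by
            rw [show Finset.univ.image (h ∘ e.symm) = (Finset.univ.image (e.symm : ι → Fin N)).image h by
              rw [Finset.image_image], Finset.image_univ_equiv]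
          rw [himg]
          have hNsk : (N : ℝ) = (s:ℝ) * k := by rw [hN]; push_cast; ring
          have : (N : ℝ) - (B₀ + t) = r - ((s:ℝ)*k - (N:ℝ)) := by rw [hrdef]; ring
          rw [this, hNsk] at hh
          simpa using hh
        · intro g _; funext q; simp
        · intro h _; funext q; simp
      rw [hcardeq]
      exact hcb
    -- exponent bound
    have hEb : (Real.exp l - 1) * ((N : ℝ) * ((N : ℝ) - 1)) / (2 * d) - l * (B₀ + t)
        ≤ -((s:ℝ) * L) := by
      have h1 : (Real.exp l - 1) * ((N : ℝ) * ((N : ℝ) - 1)) / (2 * d)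
          ≤ (Real.exp l - 1) * B₀ := by
        have hNsk : (N : ℝ) = (s:ℝ) * k := by rw [hN]; push_cast; ring
        have hel : (1:ℝ) ≤ Real.exp l := by
          rw [← Real.exp_zero]; exact Real.exp_le_exp.mpr hl0
        have hNN : (N : ℝ) * ((N : ℝ) - 1) ≤ (s:ℝ)^2 * k^2 := by
          rw [hNsk]; nlinarith [Nat.cast_nonneg (α := ℝ) N, hsR, hkR]
        rw [hB0def, show (Real.exp l - 1) * ((s:ℝ)^2*(k:ℝ)^2/(2*(d:ℝ)))
            = (Real.exp l - 1) * ((s:ℝ)^2*(k:ℝ)^2)/(2*(d:ℝ)) from by ring]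
        have h2d : (0:ℝ) < 2*(d:ℝ) := by positivity
        rw [div_le_div_iff₀ h2d h2d]
        nlinarith [mul_le_mul_of_nonneg_right (mul_le_mul_of_nonneg_left hNN
          (by linarith : (0:ℝ) ≤ Real.exp l - 1)) h2d.le]
      have h2 := hlE
      have : (Real.exp l - 1) * B₀ - l * (B₀ + t) ≤ -((s:ℝ) * L) := h2
      linarith
    have hexpb : Real.exp ((Real.exp l - 1) * ((N : ℝ) * ((N : ℝ) - 1)) / (2 * d)
        - l * (B₀ + t)) ≤ δ / (m:ℝ) ^ s := by
      have hpow : (0:ℝ) < (m:ℝ) ^ s := by positivity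
      have hlog : -((s:ℝ) * L) ≤ Real.log (δ / (m:ℝ) ^ s) := by
        rw [Real.log_div (ne_of_gt hδ0) (ne_of_gt hpow), Real.log_pow, hLdef,
          Real.log_div (by positivity) (ne_of_gt hδ0)]
        have hlogδ : Real.log δ ≤ 0 := Real.log_nonpos hδ0.le hδ1.le
        nlinarith [hsR, hlogδ]
      calc Real.exp _ ≤ Real.exp (Real.log (δ / (m:ℝ) ^ s)) :=
            Real.exp_le_exp.mpr (le_trans hEb hlog)
      _ = δ / (m:ℝ) ^ s := Real.exp_log (by positivity)
    -- put together
    calc μ (Bad X) ≤ μ (⋃ g ∈ badF, cell g) := measure_mono hcover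
    _ ≤ ∑ g ∈ badF, μ (cell g) := measure_biUnion_finset_le _ _
    _ = badF.card * ((d : ENNReal)⁻¹) ^ N := by
        rw [Finset.sum_congr rfl (fun g _ => hcellμ g), Finset.sum_const, nsmul_eq_mul]
    _ ≤ ENNReal.ofReal (δ / (m:ℝ) ^ s) := by
        have hconv : (badF.card : ENNReal) * ((d : ENNReal)⁻¹) ^ N
            = ENNReal.ofReal ((badF.card : ℝ) * ((d:ℝ)⁻¹) ^ N) := by
          rw [ENNReal.ofReal_mul (by positivity), ENNReal.ofReal_pow (by positivity),
            ENNReal.ofReal_inv_of_pos hdR, ENNReal.ofReal_natCast, ENNReal.ofReal_natCast]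
        rw [hconv]
        apply ENNReal.ofReal_le_ofReal
        have hdN : (0:ℝ) < (d:ℝ) ^ N := by positivity
        have : (badF.card : ℝ) * ((d:ℝ)⁻¹) ^ N = (badF.card : ℝ) / (d:ℝ) ^ N := by
          rw [inv_pow, div_eq_mul_inv]
        rw [this, div_le_iff₀ hdN]
        calc (badF.card : ℝ) ≤ (d : ℝ) ^ N * Real.exp ((Real.exp l - 1)
              * ((N : ℝ) * ((N : ℝ) - 1)) / (2 * d) - l * (B₀ + t)) := hbadcard
        _ ≤ (d : ℝ) ^ N * (δ / (m:ℝ) ^ s) := by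
            apply mul_le_mul_of_nonneg_left hexpb (by positivity)
        _ = δ / (m:ℝ) ^ s * (d:ℝ) ^ N := by ring
  -- union bound
  have hGc : μ Gᶜ ≤ ENNReal.ofReal δ := by
    have hsub : Gᶜ ⊆ ⋃ X ∈ Finset.powersetCard s (Finset.univ : Finset A), Bad X := by
      intro ω hω
      rw [hGdef] at hω
      simp only [Set.mem_compl_iff, Set.mem_setOf_eq, not_forall] at hω
      obtain ⟨X, hXs, hlt⟩ := hω
      refine Set.mem_biUnion (Finset.mem_powersetCard_univ.mpr hXs) ?_
      rw [hBaddef]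
      simp only [Set.mem_setOf_eq]
      push_neg at hlt
      exact hlt
    calc μ Gᶜ ≤ μ (⋃ X ∈ Finset.powersetCard s (Finset.univ : Finset A), Bad X) :=
          measure_mono hsub
    _ ≤ ∑ X ∈ Finset.powersetCard s (Finset.univ : Finset A), μ (Bad X) :=
          measure_biUnion_finset_le _ _
    _ ≤ ∑ X ∈ Finset.powersetCard s (Finset.univ : Finset A),
          ENNReal.ofReal (δ / (m:ℝ) ^ s) := by
        apply Finset.sum_le_sum
        intro X hX
        exact hperX X (Finset.mem_powersetCard_univ.mp hX)
    _ = (m.choose s : ENNReal) * ENNReal.ofReal (δ / (m:ℝ) ^ s) := by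
        rw [Finset.sum_const, nsmul_eq_mul, Finset.card_powersetCard, Finset.card_univ, hm]
    _ ≤ ENNReal.ofReal δ := by
        by_cases hsm : s ≤ m
        · have hm1 : (1:ℝ) ≤ (m:ℝ) := by exact_mod_cast le_trans hs hsm
          calc (m.choose s : ENNReal) * ENNReal.ofReal (δ / (m:ℝ) ^ s)
              ≤ ((m ^ s : ℕ) : ENNReal) * ENNReal.ofReal (δ / (m:ℝ) ^ s) := by
                gcongr
                exact_mod_cast Nat.choose_le_pow m s
          _ = ENNReal.ofReal (((m ^ s : ℕ) : ℝ) * (δ / (m:ℝ) ^ s)) := by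
                rw [ENNReal.ofReal_mul (by positivity), ENNReal.ofReal_natCast]
          _ = ENNReal.ofReal δ := by
                congr 1
                push_cast
                field_simp
        · have : Finset.powersetCard s (Finset.univ : Finset A) = ∅ := by
            rw [Finset.powersetCard_eq_empty, Finset.card_univ, hm]
            omega
          have hc0 : m.choose s = 0 := Nat.choose_eq_zero_of_lt (by omega)
          rw [hc0]
          simp
  -- conclude
  have hunion : (1 : ENNReal) ≤ μ G + μ Gᶜ := by
    rw [← measure_univ (μ := μ), ← Set.union_compl_self G]
    exact measure_union_le _ _
  have hfin : ENNReal.ofReal (1 - δ) + ENNReal.ofReal δ ≤ μ G + ENNReal.ofReal δ := by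
    rw [← ENNReal.ofReal_add (by linarith) hδ0.le]
    have : (1 - δ) + δ = 1 := by ring
    rw [this, ENNReal.ofReal_one]
    calc (1:ENNReal) ≤ μ G + μ Gᶜ := hunion
    _ ≤ μ G + ENNReal.ofReal δ := by gcongr
  have hres : ENNReal.ofReal (1 - δ) ≤ μ G :=
    (ENNReal.add_le_add_iff_right (a := ENNReal.ofReal δ) ENNReal.ofReal_ne_top).mp hfin
  exact hres
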